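/- arXiv:2307.13153 — 5 statements merged into one kernel-verified Lean document; each statement's English description precedes it below -/
import Mathlib

section
/- In an acute triangle with angles A, B, C and side BC = 1 (with vertices B=(0,0), C=(1,0), A=(p,q) where p = cos(B)sin(C)/sin(B+C) and q = sin(B)sin(C)/sin(B+C)), the minimum over x ∈ [0,1] of the squared distance between L₁ = xC + (1-x)A₁ and L₂ = xC₁ + (1-x)A, where A₁ = (p,-q) and C₁ = (cos(2B), sin(2B)), is attained at x₀ = cos(A)sin(C)/sin(B), and the minimum distance equals 2 sin(B) sin(C). -/
open Real

theorem stmt_0 (A B C : ℝ) (hA : A ∈ Set.Ioo 0 (π/2)) (hB : B ∈ Set.Ioo 0 (π/2))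
    (hC : C ∈ Set.Ioo 0 (π/2)) (hsum : A + B + C = π)
    (p q x₀ : ℝ)
    (hp : p = cos B * sin C / sin (B + C)) (hq : q = sin B * sin C / sin (B + C))
    (hx₀ : x₀ = cos A * sin C / sin B)
    (f : ℝ → ℝ)
    (hf : ∀ x, f x =
      ((x * 1 + (1 - x) * p) - (x * cos (2*B) + (1 - x) * p))^2 +
      ((x * 0 + (1 - x) * (-q)) - (x * sin (2*B) + (1 - x) * q))^2) :
    x₀ ∈ Set.Icc (0:ℝ) 1 ∧ (∀ x ∈ Set.Icc (0:ℝ) 1, f x₀ ≤ f x) ∧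
      Real.sqrt (f x₀) = 2 * sin B * sin C := by
  obtain ⟨hA0, hA2⟩ := hA
  obtain ⟨hB0, hB2⟩ := hB
  obtain ⟨hC0, hC2⟩ := hC
  have hpi := Real.pi_pos
  have hsA : 0 < sin A := Real.sin_pos_of_pos_of_lt_pi hA0 (by linarith)
  have hsB : 0 < sin B := Real.sin_pos_of_pos_of_lt_pi hB0 (by linarith)
  have hsC : 0 < sin C := Real.sin_pos_of_pos_of_lt_pi hC0 (by linarith)
  have hcA : 0 < cos A := Real.cos_pos_of_mem_Ioo ⟨by linarith, hA2⟩
  have hcC : 0 < cos C := Real.cos_pos_of_mem_Ioo ⟨by linarith, hC2⟩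
  have hsinBC : sin (B + C) = sin A := by
    rw [show B + C = π - A by linarith, Real.sin_pi_sub]
  have hsinA : sin A = sin B * cos C + cos B * sin C := by
    rw [← hsinBC, Real.sin_add]
  have hcosA : cos A = sin B * sin C - cos B * cos C := by
    rw [show A = π - (B + C) by linarith, Real.cos_pi_sub, Real.cos_add]; ring
  have hsinB : sin B = sin A * cos C + cos A * sin C := by
    rw [show B = π - (A + C) by linarith, Real.sin_pi_sub, Real.sin_add]
  have hqA : q * sin A = sin B * sin C := by
    rw [hq, hsinBC, div_mul_cancel₀ _ (ne_of_gt hsA)]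
  have hx0A : x₀ * sin B = cos A * sin C := by
    rw [hx₀, div_mul_cancel₀ _ (ne_of_gt hsB)]
  -- key algebraic lemmas
  have hL1 : sin A * (sin B * cos B - q) = -(sin B^2 * cos A) := by
    linear_combination (-1) * hqA + sin B * cos B * hsinA + sin B^2 * hcosA +
      sin B * sin C * (sin_sq_add_cos_sq B)
  have hL2 : sin A^2 * ((sin B^4 + (sin B * cos B - q)^2) * x₀ + q * (sin B * cos B - q)) = 0 := by
    linear_combination (x₀ * (sin A * (sin B * cos B - q) - sin B^2 * cos A) + q * sin A) * hL1 +
      x₀ * sin B^4 * (sin_sq_add_cos_sq A) + sin B^3 * hx0A - sin B^2 * cos A * hqA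
  have hsA2 : (sin A)^2 ≠ 0 := pow_ne_zero 2 (ne_of_gt hsA)
  have hT : (sin B^4 + (sin B * cos B - q)^2) * x₀ + q * (sin B * cos B - q) = 0 :=
    (mul_eq_zero.mp hL2).resolve_left hsA2
  have hL3 : sin A^2 * (q^2 + q * (sin B * cos B - q) * x₀) = sin A^2 * (sin B^2 * sin C^2) := by
    linear_combination (sin B * sin C + q * sin A - x₀ * sin B^2 * cos A) * hqA +
      x₀ * q * sin A * hL1 - sin B^2 * sin C^2 * (sin_sq_add_cos_sq A) - sin B^2 * sin C * cos A * hx0A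
  have hL3' : q^2 + q * (sin B * cos B - q) * x₀ = sin B^2 * sin C^2 :=
    mul_left_cancel₀ hsA2 hL3
  have hfx : ∀ y : ℝ, f y = 4*(sin B^2*y)^2 + 4*(q + y*(sin B * cos B - q))^2 := by
    intro y
    rw [hf y, Real.cos_two_mul', Real.sin_two_mul]
    linear_combination (-(y^2*(1 - cos B^2 + 3*sin B^2))) * (sin_sq_add_cos_sq B)
  have hfval : f x₀ = 4 * (sin B^2 * sin C^2) := by
    linear_combination (hfx x₀) + 4 * x₀ * hT + 4 * hL3'
  refine ⟨⟨?_, ?_⟩, ?_, ?_⟩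
  · rw [hx₀]
    exact div_nonneg (mul_nonneg hcA.le hsC.le) hsB.le
  · rw [hx₀, div_le_one hsB, hsinB]
    linarith [mul_nonneg hsA.le hcC.le]
  · intro x _
    have hE : f x = f x₀ + 4 * (sin B^4 + (sin B * cos B - q)^2) * (x - x₀)^2 := by
      linear_combination (hfx x) - (hfx x₀) + 8 * (x - x₀) * hT
    have hnn : 0 ≤ 4 * (sin B^4 + (sin B * cos B - q)^2) * (x - x₀)^2 := by positivity
    linarith [hE]
  · rw [hfval, show 4 * (sin B^2 * sin C^2) = (2 * sin B * sin C)^2 by ring,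
      Real.sqrt_sq (by positivity)]
end

section
/- Let triangle ABC be placed with B = (0,0), C = (1,0), A = (x,y) with y > 0. Let K = (x, 0) be the foot of the altitude from A, let M = (x²/(x²+y²), xy/(x²+y²)) be the foot of the altitude from C onto AB, let C' = (1 - 2y²/(x²+y²), 2xy/(x²+y²)) be the reflection of C about line AB, and let L₁ be the orthogonal projection of B onto the line through A and C'. Then the points K, M, L₁ are collinear. -/
/-- Points are given in coordinates; collinearity of `K`, `M`, `L₁` is stated as the
vanishing of the determinant of the matrix of homogeneous coordinates. -/
theorem stmt_5 (x y : ℝ) (hy : 0 < y)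
    (K M C' L₁ : ℝ × ℝ) (r : ℝ)
    (hK : K = (x, 0))
    (hM : M = (x^2 / (x^2 + y^2), x * y / (x^2 + y^2)))
    (hC' : C' = (1 - 2 * y^2 / (x^2 + y^2), 2 * x * y / (x^2 + y^2)))
    (hr : r = (x^2 - x * C'.1 + y * (y - C'.2)) / ((x - C'.1)^2 + (y - C'.2)^2))
    (hL₁ : L₁ = (r * C'.1 + (1 - r) * x, r * C'.2 + (1 - r) * y)) :
    Matrix.det !![K.1, K.2, 1; M.1, M.2, 1; L₁.1, L₁.2, 1] = 0 := by
  have hs : (0:ℝ) < x^2 + y^2 := by positivity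
  have hs' : (x^2 + y^2 : ℝ) ≠ 0 := ne_of_gt hs
  have hden : (x - C'.1)^2 + (y - C'.2)^2 = (x-1)^2 + y^2 := by
    subst hC'; simp only []
    field_simp
    ring
  have hd : ((x:ℝ)-1)^2 + y^2 ≠ 0 := by positivity
  subst hK hM hL₁
  rw [Matrix.det_fin_three]
  simp [Matrix.vecHead, Matrix.vecTail]
  rw [hr, hden]
  subst hC'
  field_simp
  ring
end

section
/- Composing five reflections of a triangle ABC (reflect C about AB, then B about AC₁, then A about B₁C₁, then C₁ about A₁B₁, then B₁ about A₁C₂) rotates the direction of the image of segment BC by total angle 2B + 3C + 3A + B = 3π; hence the line through B₂ and C₂ is parallel to the line through B and C. -/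
open scoped RealInnerProductSpace

section helpers

local notation "K" => (starRingEnd ℂ)

/-- The identification of the Euclidean plane with `ℂ`. -/
noncomputable def cx (P : EuclideanSpace ℝ (Fin 2)) : ℂ := ⟨P 0, P 1⟩

lemma cx_sub (P Q : EuclideanSpace ℝ (Fin 2)) : cx (P - Q) = cx P - cx Q := by
  apply Complex.ext <;> simp [cx]

lemma cx_inj {P Q : EuclideanSpace ℝ (Fin 2)} (h : cx P = cx Q) : P = Q := by
  ext i
  fin_cases i
  · exact congrArg Complex.re h
  · exact congrArg Complex.im h

lemma orth_cx (P Q X Y : EuclideanSpace ℝ (Fin 2)) (h : ⟪Q - P, Y - X⟫ = 0) :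
    (cx Q - cx P) * K (cx Y - cx X) + K (cx Q - cx P) * (cx Y - cx X) = 0 := by
  simp [PiLp.inner_apply, Fin.sum_univ_two] at h
  apply Complex.ext <;> simp [cx] <;> ring_nf <;> nlinarith [h]

lemma mid_cx (P Q X Y : EuclideanSpace ℝ (Fin 2)) (h : midpoint ℝ P Q ∈ line[ℝ, X, Y]) :
    ∃ r : ℝ, (r : ℂ) * (cx Y - cx X) + cx X = 2⁻¹ * (cx P + cx Q) := by
  have h' : (midpoint ℝ P Q - X) +ᵥ X ∈ line[ℝ, X, Y] := by simpa using h
  obtain ⟨r, hr⟩ := vadd_left_mem_affineSpan_pair.mp h'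
  refine ⟨r, ?_⟩
  have h0 : r * (Y 0 - X 0) = midpoint ℝ P Q 0 - X 0 := by
    simpa using congrArg (· 0) hr
  have h1 : r * (Y 1 - X 1) = midpoint ℝ P Q 1 - X 1 := by
    simpa using congrArg (· 1) hr
  have m0 : midpoint ℝ P Q 0 = 2⁻¹ * (P 0 + Q 0) := by
    simp [midpoint_eq_smul_add]
    ring
  have m1 : midpoint ℝ P Q 1 = 2⁻¹ * (P 1 + Q 1) := by
    simp [midpoint_eq_smul_add]
    ring
  apply Complex.ext <;> simp [cx] <;> nlinarith [h0, h1, m0, m1]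

lemma refl_key (x y p q : ℂ) (r : ℝ)
    (hm : (r : ℂ) * (y - x) + x = 2⁻¹ * (p + q))
    (ho : (q - p) * K (y - x) + K (q - p) * (y - x) = 0) :
    K (y - x) * (q - x) = (y - x) * K (p - x) := by
  have hm' := congrArg K hm
  simp only [map_add, map_mul, map_sub, map_inv₀, Complex.conj_ofReal, map_ofNat] at hm'
  simp only [map_sub] at ho ⊢
  linear_combination (1/2 : ℂ) * ho - (K y - K x) * hm + (y - x) * hm'

theorem main_cx (a b c c₁ b₁ a₁ c₂ b₂ : ℂ)
    (hab : a ≠ b) (hac : a ≠ c) (hbc : b ≠ c)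
    (e1 : K (b - a) * (c₁ - a) = (b - a) * K (c - a))
    (e2 : K (c₁ - a) * (b₁ - a) = (c₁ - a) * K (b - a))
    (e3 : K (c₁ - b₁) * (a₁ - b₁) = (c₁ - b₁) * K (a - b₁))
    (e4 : K (b₁ - a₁) * (c₂ - a₁) = (b₁ - a₁) * K (c₁ - a₁))
    (e5 : K (c₂ - a₁) * (b₂ - a₁) = (c₂ - a₁) * K (b₁ - a₁)) :
    c₂ - b₂ = c - b := by
  simp only [map_sub] at e1 e2 e3 e4 e5
  have hu : b - a ≠ 0 := sub_ne_zero.mpr (Ne.symm hab)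
  have hv : c - a ≠ 0 := sub_ne_zero.mpr (Ne.symm hac)
  have hd : c - b ≠ 0 := sub_ne_zero.mpr (Ne.symm hbc)
  have conj_ne : ∀ x y : ℂ, x - y ≠ 0 → K x - K y ≠ 0 := by
    intro x y h hxy
    apply h
    have := congrArg K hxy
    simpa [sub_eq_zero] using this
  have hu' : K b - K a ≠ 0 := conj_ne _ _ hu
  have hv' : K c - K a ≠ 0 := conj_ne _ _ hv
  have hd' : K c - K b ≠ 0 := conj_ne _ _ hd
  have cM1 : (K c₁ - K a) * (b - a) = (K b - K a) * (c - a) := by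
    have h := congrArg K e1
    simp only [map_mul, map_sub, Complex.conj_conj] at h
    linear_combination h
  have M2 : (b₁ - a) * (K b - K a) * (c - a) = (b - a) ^ 2 * (K c - K a) := by
    linear_combination (b - a) * e2 + (b - a) * e1 - (b₁ - a) * cM1
  have cM2 : (K b₁ - K a) * (b - a) * (K c - K a) = (K b - K a) ^ 2 * (c - a) := by
    have h := congrArg K M2
    simp only [map_mul, map_sub, map_pow, Complex.conj_conj] at h
    linear_combination h
  have M3 : (c₁ - b₁) * (K b - K a) * (c - a) = (b - a) * (K c - K a) * (c - b) := by
    linear_combination (c - a) * e1 - M2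
  have cM3 : (K c₁ - K b₁) * (b - a) * (K c - K a) = (K b - K a) * (c - a) * (K c - K b) := by
    have h := congrArg K M3
    simp only [map_mul, map_sub, Complex.conj_conj] at h
    linear_combination h
  have M4 : (a₁ - b₁) * (c - a) * (K c - K b) = -((b - a) * (K c - K a) * (c - b)) := by
    apply mul_left_cancel₀ hu'
    linear_combination (b - a) * (K c - K a) * e3 - (a₁ - b₁) * cM3 - (c₁ - b₁) * cM2
      - (K b - K a) * M3
  have M5 : (b₁ - a₁) * (c - a) * (K c - K b) = (b - a) * (K c - K a) * (c - b) := by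
    linear_combination -M4
  have cM5 : (K b₁ - K a₁) * (K c - K a) * (c - b) = (K b - K a) * (c - a) * (K c - K b) := by
    have h := congrArg K M5
    simp only [map_mul, map_sub, Complex.conj_conj] at h
    linear_combination h
  have M6 : (c₁ - a₁) * (c - a) * (K b - K a) * (K c - K b)
      = (b - a) * (K c - K a) ^ 2 * (c - b) := by
    linear_combination (K c - K b) * M3 - (K b - K a) * M4
  have cM6 : (K c₁ - K a₁) * (K c - K a) * (b - a) * (c - b)
      = (K b - K a) * (c - a) ^ 2 * (K c - K b) := by
    have h := congrArg K M6
    simp only [map_mul, map_sub, map_pow, Complex.conj_conj] at h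
    linear_combination h
  have M7 : (c₂ - a₁) * (K c - K b) = (K c - K a) * (c - b) := by
    apply mul_left_cancel₀ (mul_ne_zero (mul_ne_zero (mul_ne_zero hu' hv) hu) hd)
    linear_combination (b - a) * (c - b) * (K c - K a) * (c - b) * e4
      - (b - a) * (c - b) * (c₂ - a₁) * cM5 + (c - b) * (b₁ - a₁) * cM6
      + (c - b) * (K b - K a) * (c - a) * M5
  have cM7 : (K c₂ - K a₁) * (c - b) = (c - a) * (K c - K b) := by
    have h := congrArg K M7
    simp only [map_mul, map_sub, Complex.conj_conj] at h
    linear_combination h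
  have M8 : (b₂ - a₁) * (K c - K b) = (K b - K a) * (c - b) := by
    apply mul_left_cancel₀ (mul_ne_zero (mul_ne_zero hv hd) hv')
    linear_combination (K c - K a) * (c - b) * (c - b) * e5
      - (K c - K a) * (c - b) * (b₂ - a₁) * cM7 + (c - b) * (c₂ - a₁) * cM5
      + (K b - K a) * (c - a) * (c - b) * M7
  apply mul_left_cancel₀ hd'
  linear_combination M7 - M8

end helpers

/-- Each reflection `Q` of a point `P` across the line through two points `X`, `Y`
is characterized by: the midpoint of `P Q` lies on the line, and `Q - P` is
orthogonal to `Y - X`.  After the five successive reflections producing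
`C₁, B₁, A₁, C₂, B₂`, the line through `B₂` and `C₂` is parallel to the line
through `B` and `C`. -/
theorem stmt_6 (A B C C₁ B₁ A₁ C₂ B₂ : EuclideanSpace ℝ (Fin 2))
    (hABC : AffineIndependent ℝ ![A, B, C])
    (hC₁m : midpoint ℝ C C₁ ∈ line[ℝ, A, B]) (hC₁o : ⟪C₁ - C, B - A⟫ = 0)
    (hB₁m : midpoint ℝ B B₁ ∈ line[ℝ, A, C₁]) (hB₁o : ⟪B₁ - B, C₁ - A⟫ = 0)
    (hA₁m : midpoint ℝ A A₁ ∈ line[ℝ, B₁, C₁]) (hA₁o : ⟪A₁ - A, C₁ - B₁⟫ = 0)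
    (hC₂m : midpoint ℝ C₁ C₂ ∈ line[ℝ, A₁, B₁]) (hC₂o : ⟪C₂ - C₁, B₁ - A₁⟫ = 0)
    (hB₂m : midpoint ℝ B₁ B₂ ∈ line[ℝ, A₁, C₂]) (hB₂o : ⟪B₂ - B₁, C₂ - A₁⟫ = 0) :
    ∃ t : ℝ, C₂ - B₂ = t • (C - B) := by
  have hAB : A ≠ B := by
    simpa using hABC.injective.ne (show (0 : Fin 3) ≠ 1 by decide)
  have hAC : A ≠ C := by
    simpa using hABC.injective.ne (show (0 : Fin 3) ≠ 2 by decide)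
  have hBC : B ≠ C := by
    simpa using hABC.injective.ne (show (1 : Fin 3) ≠ 2 by decide)
  have cab : cx A ≠ cx B := fun h => hAB (cx_inj h)
  have cac : cx A ≠ cx C := fun h => hAC (cx_inj h)
  have cbc : cx B ≠ cx C := fun h => hBC (cx_inj h)
  obtain ⟨r1, hr1⟩ := mid_cx C C₁ A B hC₁m
  obtain ⟨r2, hr2⟩ := mid_cx B B₁ A C₁ hB₁m
  obtain ⟨r3, hr3⟩ := mid_cx A A₁ B₁ C₁ hA₁m
  obtain ⟨r4, hr4⟩ := mid_cx C₁ C₂ A₁ B₁ hC₂m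
  obtain ⟨r5, hr5⟩ := mid_cx B₁ B₂ A₁ C₂ hB₂m
  have e1 := refl_key (cx A) (cx B) (cx C) (cx C₁) r1 hr1 (orth_cx C C₁ A B hC₁o)
  have e2 := refl_key (cx A) (cx C₁) (cx B) (cx B₁) r2 hr2 (orth_cx B B₁ A C₁ hB₁o)
  have e3 := refl_key (cx B₁) (cx C₁) (cx A) (cx A₁) r3 hr3 (orth_cx A A₁ B₁ C₁ hA₁o)
  have e4 := refl_key (cx A₁) (cx B₁) (cx C₁) (cx C₂) r4 hr4 (orth_cx C₁ C₂ A₁ B₁ hC₂o)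
  have e5 := refl_key (cx A₁) (cx C₂) (cx B₁) (cx B₂) r5 hr5 (orth_cx B₁ B₂ A₁ C₂ hB₂o)
  have key := main_cx (cx A) (cx B) (cx C) (cx C₁) (cx B₁) (cx A₁) (cx C₂) (cx B₂)
    cab cac cbc e1 e2 e3 e4 e5
  refine ⟨1, ?_⟩
  rw [one_smul]
  apply cx_inj
  rw [cx_sub, cx_sub]
  exact key
end

section
/- For all A, B, C ∈ [0, π/2] with A + B + C = π, the function f(A,B,C) = (sin A + sin B + sin C)/(2(1 + cos A cos B cos C)) satisfies 1 ≤ f(A,B,C) ≤ (1 + √2)/2, with the maximum attained at (π/4, π/4, π/2). -/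
set_option maxHeartbeats 800000

open Real

private lemma psi1 (z y r : ℝ) (hr : r^2=2) (hr1 : 1 ≤ r) (hz1 : z ≤ r-1) (hz0 : 1 ≤ (2+r)*z)
    (hy : y ≤ 1 - z^2/2) :
    0 ≤ (3+2*r)*z*(1-z*(1+z)/2) - (1+r)*z*y - (1+z)/2 := by
  have hzp : 0 < z := by nlinarith
  have : (1+r)*z*y ≤ (1+r)*z*(1 - z^2/2) :=
    mul_le_mul_of_nonneg_left hy (by positivity)
  nlinarith [mul_nonneg (by linarith : (0:ℝ) ≤ (2+r)*z - 1) (by linarith : (0:ℝ) ≤ r - 1 - z),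
    sq_nonneg (z - 1/3), sq_nonneg (z - 2/5),
    mul_nonneg (mul_nonneg hzp.le hzp.le) (by linarith : (0:ℝ) ≤ r-1-z)]

private lemma core (t s u r : ℝ) (hs : 0 ≤ s) (hst : s ≤ t) (h1 : t^2+s^2=1) (hrt : 1 ≤ r*t)
    (htu : t ≤ u) (hu1 : u ≤ 1) (hr : r^2=2) (hr1 : 1 ≤ r) :
    2*t*u + 2*t*s ≤ (1+r)*(1 + (2*t^2-1)*(u^2-t^2)) := by
  have ht : 0 < t := by nlinarith
  rcases le_or_gt (r-1) (2*t^2-1) with hz | hz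
  · -- Case A: min at u = t
    have hz1 : 1 ≤ (1+r)*(2*t^2-1) := by nlinarith
    have key1 : 0 ≤ (1+r)*(2*t^2-1)*(u+t) - 2*t := by
      nlinarith [mul_nonneg (by linarith : (0:ℝ) ≤ (1+r)*(2*t^2-1) - 1) (by linarith : (0:ℝ) ≤ u + t)]
    have key2 : 0 ≤ r - (2*t^2-1) - 2*t*s := by
      nlinarith [sq_nonneg (t^2 - 2*t*s - s^2), sq_nonneg (t+s)]
    nlinarith [mul_nonneg (sub_nonneg.2 htu) key1]
  · have hz0 : 0 ≤ 2*t^2 - 1 := by nlinarith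
    rcases le_or_gt ((1+r)*(2*t^2-1)) t with hb | hb
    · -- Case B1: min at u = 1
      have key1 : 0 ≤ (1-u)*(2*t - (1+r)*(2*t^2-1)*(u+1)) := by
        apply mul_nonneg (by linarith); nlinarith
      have key2 : 0 ≤ (1+r)*(1 + (2*t^2-1)*(1-t^2)) - 2*t - 2*t*s := by
        nlinarith [sq_nonneg (r*t-1), sq_nonneg (r*s-1), sq_nonneg (t-s),
          sq_nonneg (t*s*r - t - s + r/2*(t-s)^2)]
      nlinarith [key1, key2]
    · -- Case B2: interior minimum, completed square
      have hz1 : 2*t^2-1 ≤ r-1 := le_of_lt hz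
      have hzp : 0 < 2*t^2-1 := by nlinarith
      have hz0' : 1 ≤ (2+r)*(2*t^2-1) := by nlinarith
      have hs2 : s^2 = 1 - t^2 := by linarith
      have ha : 0 ≤ 2*t*s := by positivity
      have hb' : (0:ℝ) < 1 - (2*t^2-1)^2/2 := by nlinarith
      have hykey : (1 - (2*t^2-1)^2/2)^2 - (2*t*s)^2 = ((2*t^2-1)^2/2)^2 := by
        linear_combination (-4*t^2) * hs2
      have hy : 2*t*s ≤ 1 - (2*t^2-1)^2/2 := by nlinarith [hykey, ha, hb']
      have psi' := psi1 (2*t^2-1) (2*t*s) r hr hr1 hz1 hz0' hy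
      have hc : (0:ℝ) < (1+r)*(2*t^2-1) := mul_pos (by linarith) hzp
      have key : (1+r)*(2*t^2-1) * ((1+r)*(1 + (2*t^2-1)*(u^2-t^2)) - (2*t*u + 2*t*s))
          = ((1+r)*(2*t^2-1)*u - t)^2
            + ((3+2*r)*(2*t^2-1)*(1-(2*t^2-1)*(1+(2*t^2-1))/2)
               - (1+r)*(2*t^2-1)*(2*t*s) - (1+(2*t^2-1))/2) := by
        linear_combination ((2*t^2-1)*(1-(2*t^2-1)*(1+(2*t^2-1))/2)) * hr
      have hX : 0 ≤ (1+r)*(2*t^2-1) * ((1+r)*(1 + (2*t^2-1)*(u^2-t^2)) - (2*t*u + 2*t*s)) := by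
        rw [key]; positivity
      have := (mul_nonneg_iff_of_pos_left hc).mp hX
      linarith

theorem stmt_11 :
    (∀ A B C : ℝ, A ∈ Set.Icc 0 (π/2) → B ∈ Set.Icc 0 (π/2) → C ∈ Set.Icc 0 (π/2) →
      A + B + C = π →
      1 ≤ (sin A + sin B + sin C) / (2 * (1 + cos A * cos B * cos C)) ∧
      (sin A + sin B + sin C) / (2 * (1 + cos A * cos B * cos C)) ≤ (1 + Real.sqrt 2) / 2) ∧
    (sin (π/4) + sin (π/4) + sin (π/2)) / (2 * (1 + cos (π/4) * cos (π/4) * cos (π/2)))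
      = (1 + Real.sqrt 2) / 2 := by
  constructor
  · rintro A B C ⟨hA0, hA2⟩ ⟨hB0, hB2⟩ ⟨hC0, hC2⟩ hsum
    have hpi := Real.pi_pos
    have hcA : 0 ≤ cos A := Real.cos_nonneg_of_mem_Icc ⟨by linarith, hA2⟩
    have hcB : 0 ≤ cos B := Real.cos_nonneg_of_mem_Icc ⟨by linarith, hB2⟩
    have hcC : 0 ≤ cos C := Real.cos_nonneg_of_mem_Icc ⟨by linarith, hC2⟩
    have hsA : 0 ≤ sin A := Real.sin_nonneg_of_nonneg_of_le_pi hA0 (by linarith)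
    have hsB : 0 ≤ sin B := Real.sin_nonneg_of_nonneg_of_le_pi hB0 (by linarith)
    have hsC : 0 ≤ sin C := Real.sin_nonneg_of_nonneg_of_le_pi hC0 (by linarith)
    have hp : 0 ≤ cos A * cos B * cos C := by positivity
    have hD : (0:ℝ) < 2 * (1 + cos A * cos B * cos C) := by linarith
    have hC' : C = π - (A + B) := by linarith
    have hsinC : sin C = sin (A+B) := by rw [hC', Real.sin_pi_sub]
    have hcosC : cos C = -cos (A+B) := by rw [hC', Real.cos_pi_sub]
    have ident : sin A ^2 + sin B ^2 + sin C ^2 = 2 * (1 + cos A * cos B * cos C) := by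
      rw [hsinC, hcosC, Real.sin_add, Real.cos_add]
      linear_combination (1 + cos B^2) * Real.sin_sq_add_cos_sq A
        + (1 + cos A^2) * Real.sin_sq_add_cos_sq B
    constructor
    · rw [le_div_iff₀ hD]
      have e1 : 0 ≤ sin A * (1 - sin A) := mul_nonneg hsA (by linarith [Real.sin_le_one A])
      have e2 : 0 ≤ sin B * (1 - sin B) := mul_nonneg hsB (by linarith [Real.sin_le_one B])
      have e3 : 0 ≤ sin C * (1 - sin C) := mul_nonneg hsC (by linarith [Real.sin_le_one C])
      nlinarith [ident, e1, e2, e3]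
    · rw [div_le_div_iff₀ hD (by norm_num : (0:ℝ) < 2)]
      set r := Real.sqrt 2 with hrdef
      have hr : r^2 = 2 := Real.sq_sqrt (by norm_num)
      have hr1 : 1 ≤ r := by nlinarith [Real.sqrt_nonneg 2]
      set t := cos (C/2) with htdef
      set s := sin (C/2) with hsdef
      set u := cos ((A-B)/2) with hudef
      have h1 : t^2 + s^2 = 1 := by
        rw [htdef, hsdef, add_comm]; exact Real.sin_sq_add_cos_sq _
      have hs : 0 ≤ s := Real.sin_nonneg_of_nonneg_of_le_pi (by linarith) (by linarith)
      have hst : s ≤ t := by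
        rw [hsdef, htdef, ← Real.cos_pi_div_two_sub]
        apply Real.cos_le_cos_of_nonneg_of_le_pi (by linarith) (by linarith) (by linarith)
      have hrt : 1 ≤ r * t := by
        have h4 : cos (π/4) ≤ t := by
          apply Real.cos_le_cos_of_nonneg_of_le_pi (by linarith) (by linarith) (by linarith)
        rw [Real.cos_pi_div_four] at h4
        nlinarith [Real.sqrt_nonneg 2]
      have hu1 : u ≤ 1 := Real.cos_le_one _
      have habs : |(A-B)/2| ≤ C/2 := by
        rw [abs_le]; constructor <;> [linarith; linarith]
      have htu : t ≤ u := by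
        rw [hudef, ← Real.cos_abs ((A-B)/2)]
        apply Real.cos_le_cos_of_nonneg_of_le_pi (abs_nonneg _) (by linarith) habs
      have hAB : (A+B)/2 = π/2 - C/2 := by linarith
      have esum : sin A + sin B = 2 * sin ((A+B)/2) * cos ((A-B)/2) := by
        have h₁ : sin A = sin ((A+B)/2 + (A-B)/2) := by rw [show (A+B)/2 + (A-B)/2 = A by ring]
        have h₂ : sin B = sin ((A+B)/2 - (A-B)/2) := by rw [show (A+B)/2 - (A-B)/2 = B by ring]
        rw [h₁, h₂, Real.sin_add, Real.sin_sub]; ring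
      have esAB : sin A + sin B = 2 * t * u := by
        rw [esum, hAB, Real.sin_pi_div_two_sub]
      have esC : sin C = 2 * t * s := by
        have hC2' : C = 2 * (C/2) := by ring
        rw [hC2', Real.sin_two_mul]; ring
      have ecC : cos C = 2*t^2 - 1 := by
        have hC2' : C = 2 * (C/2) := by ring
        rw [hC2', Real.cos_two_mul]
      have ecAB : cos A * cos B = u^2 - t^2 := by
        have e1 : cos (A-B) = 2*u^2 - 1 := by
          have hAB2 : A - B = 2 * ((A-B)/2) := by ring
          rw [hAB2, Real.cos_two_mul]
        have e2 : cos (A+B) = -(2*t^2-1) := by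
          have hABpi : A + B = π - C := by linarith
          rw [hABpi, Real.cos_pi_sub, ecC]
        have e3 : cos (A-B) + cos (A+B) = 2 * (cos A * cos B) := by
          rw [Real.cos_add, Real.cos_sub]; ring
        linarith [e1, e2, e3]
      have main := core t s u r hs hst h1 hrt htu hu1 hr hr1
      rw [esAB, esC, ecAB, ecC]
      linarith [main]
  · have h2 : Real.sqrt 2 > 0 := by positivity
    have hr : Real.sqrt 2 ^ 2 = 2 := Real.sq_sqrt (by norm_num)
    rw [Real.sin_pi_div_four, Real.sin_pi_div_two, Real.cos_pi_div_four, Real.cos_pi_div_two]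
    field_simp
    ring
end

section
/- Let S = {s_i} be a patrolling schedule on the three edges of a triangle that is not cyclic: for some indices k and ℓ ≥ 4, edge α is visited at steps k and k+ℓ, edge β at steps k+1 and k+3, and edge γ at step k+2. Then the 1-gap of S is at least min{G', G''}, where G' is the perimeter of triangle s_k s_{k+1} s_{k+2} and G'' is the perimeter of triangle s_{k+2} s_{k+3} s_{k+ℓ}; consequently, one of the two 3-periodic cyclic schedules cycling through these point triples has 1-gap at most that of S. -/
theorem stmt_16 (s : ℕ → EuclideanSpace ℝ (Fin 2)) (k ℓ : ℕ) (hℓ : 4 ≤ ℓ) :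
    min (dist (s k) (s (k+1)) + dist (s (k+1)) (s (k+2)) + dist (s (k+2)) (s k))
        (dist (s (k+2)) (s (k+3)) + dist (s (k+3)) (s (k+ℓ)) + dist (s (k+ℓ)) (s (k+2)))
      ≤ ∑ i ∈ Finset.range ℓ, dist (s (k+i)) (s (k+i+1)) := by
  obtain ⟨m, rfl⟩ : ∃ m, ℓ = 3 + m := ⟨ℓ - 3, by omega⟩
  rw [Finset.sum_range_add]
  have htail : dist (s (k+3)) (s (k+(3+m))) ≤
      ∑ i ∈ Finset.range m, dist (s (k+(3+i))) (s (k+(3+i)+1)) := by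
    have := dist_le_range_sum_dist (fun i => s (k+3+i)) m
    simpa [Nat.add_assoc, Nat.add_comm, Nat.add_left_comm] using this
  have h1 : dist (s (k+2)) (s k) ≤ dist (s k) (s (k+1)) + dist (s (k+1)) (s (k+2)) := by
    rw [dist_comm]
    exact dist_triangle _ _ _
  have h2 : dist (s (k+(3+m))) (s (k+2)) ≤
      dist (s (k+2)) (s (k+3)) + dist (s (k+3)) (s (k+(3+m))) := by
    rw [dist_comm]
    exact dist_triangle _ _ _
  have hmin : min (dist (s k) (s (k+1)) + dist (s (k+1)) (s (k+2)) + dist (s (k+2)) (s k))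
        (dist (s (k+2)) (s (k+3)) + dist (s (k+3)) (s (k+(3+m))) + dist (s (k+(3+m))) (s (k+2)))
      ≤ dist (s k) (s (k+1)) + dist (s (k+1)) (s (k+2)) + dist (s (k+2)) (s (k+3))
        + dist (s (k+3)) (s (k+(3+m))) := by
    have ha := min_le_left (dist (s k) (s (k+1)) + dist (s (k+1)) (s (k+2)) + dist (s (k+2)) (s k))
        (dist (s (k+2)) (s (k+3)) + dist (s (k+3)) (s (k+(3+m))) + dist (s (k+(3+m))) (s (k+2)))
    have hb := min_le_right (dist (s k) (s (k+1)) + dist (s (k+1)) (s (k+2)) + dist (s (k+2)) (s k))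
        (dist (s (k+2)) (s (k+3)) + dist (s (k+3)) (s (k+(3+m))) + dist (s (k+(3+m))) (s (k+2)))
    linarith
  have hsum3 : ∑ i ∈ Finset.range 3, dist (s (k+i)) (s (k+i+1)) =
      dist (s k) (s (k+1)) + dist (s (k+1)) (s (k+2)) + dist (s (k+2)) (s (k+3)) := by
    simp [Finset.sum_range_succ]
  calc min _ _ ≤ dist (s k) (s (k+1)) + dist (s (k+1)) (s (k+2)) + dist (s (k+2)) (s (k+3))
        + dist (s (k+3)) (s (k+(3+m))) := hmin
    _ ≤ _ := by rw [hsum3]; gcongr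
end
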